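/- arXiv:2104.04904 — 3 statements merged into one kernel-verified Lean document; each statement's English description precedes it below -/
import Mathlib

section
/- Soundness of the SaSTL quantitative semantics: for every SaSTL formula φ, every spatial-temporal signal ω, every sample time t in 𝕋 and every location l in L, if ρ(φ,ω,t,l) > 0 then (ω,t,l) ⊨ φ, and if ρ(φ,ω,t,l) < 0 then (ω,t,l) ⊭ φ. -/
open scoped Classical

noncomputable section

/-- Aggregation operations of SaSTL. -/
inductive AggOp : Type
  | max | min | sum | avg

/-- SaSTL formulas over a set of signal variables `Var` and a set of
spatial-domain indices `Dom`.  `untl I φ ψ` is the bounded until `φ U_I ψ`,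
`agg op D x c` is the spatial aggregation atom `A_D^op x > c`, and
`cnt op D φ c` is the spatial counting formula `C_D^op φ > c`. -/
inductive SaSTL (Var Dom : Type) : Type
  | atom : Var → ℝ → SaSTL Var Dom
  | not  : SaSTL Var Dom → SaSTL Var Dom
  | and  : SaSTL Var Dom → SaSTL Var Dom → SaSTL Var Dom
  | untl : Set ℝ → SaSTL Var Dom → SaSTL Var Dom → SaSTL Var Dom
  | agg  : AggOp → Dom → Var → ℝ → SaSTL Var Dom
  | cnt  : AggOp → Dom → SaSTL Var Dom → ℝ → SaSTL Var Dom

/-- A monitoring frame: a finite nonempty set `T` of real sample times, and,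
for every spatial-domain index `D` and location `l`, a finite nonempty set
`nbr D l` of neighbouring locations (the set `L_D^l`). -/
structure Frame (Dom Loc : Type) where
  T : Finset ℝ
  T_ne : T.Nonempty
  nbr : Dom → Loc → Finset Loc
  nbr_ne : ∀ D l, (nbr D l).Nonempty

/-- The `k`-th largest element of a finite multiset of reals: the element at
position `k` when the entries are listed in non-increasing order. -/
def kthLargest (m : Multiset ℝ) (k : ℕ) : ℝ :=
  (Multiset.sort m (· ≤ ·)).getD (Multiset.card m - k) 0

variable {Var Dom Loc : Type}
lemma kth_pos_count (m : Multiset ℝ) (k : ℕ) (hk1 : 1 ≤ k) (hk : k ≤ Multiset.card m)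
    (h : 0 < kthLargest m k) :
    k ≤ Multiset.countP (fun x => 0 < x) m := by
  set L := Multiset.sort m (· ≤ ·) with hL
  have hlen : L.length = Multiset.card m := Multiset.length_sort _
  have hidx : Multiset.card m - k < L.length := by omega
  have hget : kthLargest m k = L.get ⟨Multiset.card m - k, hidx⟩ := by
    simp [kthLargest, List.getD_eq_getElem, hidx, ← hL]
  have hcount : Multiset.countP (fun x => 0 < x) m = L.countP (fun x => decide (0 < x)) := by
    conv_lhs => rw [← Multiset.sort_eq m (· ≤ ·)]
    simp [Multiset.coe_countP, ← hL]
  rw [hcount]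
  have hsplit : L.countP (fun x => decide (0 < x)) =
      (L.take (Multiset.card m - k)).countP (fun x => decide (0 < x)) +
      (L.drop (Multiset.card m - k)).countP (fun x => decide (0 < x)) := by
    rw [← List.countP_append, List.take_append_drop]
  have hdrop : (L.drop (Multiset.card m - k)).countP (fun x => decide (0 < x)) =
      (L.drop (Multiset.card m - k)).length := by
    rw [List.countP_eq_length]
    intro a ha
    obtain ⟨i, hi, rfl⟩ := List.mem_iff_getElem.mp ha
    rw [List.getElem_drop]
    have hsor : L.Pairwise (· ≤ ·) := Multiset.pairwise_sort _ _
    have := hsor.rel_get_of_le (a := ⟨Multiset.card m - k, hidx⟩)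
      (b := ⟨Multiset.card m - k + i, by rw [List.length_drop] at hi; omega⟩) (by simp)
    simp only [List.get_eq_getElem] at this
    rw [hget] at h
    simp only [List.get_eq_getElem] at h
    simpa using lt_of_lt_of_le h this
  rw [hsplit, hdrop, List.length_drop]
  omega

lemma kth_neg_count (m : Multiset ℝ) (k : ℕ) (hk1 : 1 ≤ k) (hk : k ≤ Multiset.card m)
    (h : kthLargest m k < 0) :
    Multiset.countP (fun x => 0 ≤ x) m ≤ k - 1 := by
  set L := Multiset.sort m (· ≤ ·) with hL
  have hlen : L.length = Multiset.card m := Multiset.length_sort _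
  have hidx : Multiset.card m - k < L.length := by omega
  have hget : kthLargest m k = L.get ⟨Multiset.card m - k, hidx⟩ := by
    simp [kthLargest, List.getD_eq_getElem, hidx, ← hL]
  have hcount : Multiset.countP (fun x => 0 ≤ x) m = L.countP (fun x => decide (0 ≤ x)) := by
    conv_lhs => rw [← Multiset.sort_eq m (· ≤ ·)]
    simp [Multiset.coe_countP, ← hL]
  rw [hcount]
  have hsplit : L.countP (fun x => decide (0 ≤ x)) =
      (L.take (Multiset.card m - k + 1)).countP (fun x => decide (0 ≤ x)) +
      (L.drop (Multiset.card m - k + 1)).countP (fun x => decide (0 ≤ x)) := by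
    rw [← List.countP_append, List.take_append_drop]
  have htake : (L.take (Multiset.card m - k + 1)).countP (fun x => decide (0 ≤ x)) = 0 := by
    rw [List.countP_eq_zero]
    intro a ha
    rw [List.mem_take_iff_getElem] at ha
    obtain ⟨i, hi, rfl⟩ := ha
    have hi' : i ≤ Multiset.card m - k := by omega
    have hsor : L.Pairwise (· ≤ ·) := Multiset.pairwise_sort _ _
    have := hsor.rel_get_of_le (a := ⟨i, by omega⟩) (b := ⟨Multiset.card m - k, hidx⟩) hi'
    simp only [List.get_eq_getElem] at this
    rw [hget] at h
    simp only [List.get_eq_getElem] at h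
    simp only [decide_eq_true_eq, not_le]
    exact lt_of_le_of_lt this h
  have hd := (L.drop (Multiset.card m - k + 1)).countP_le_length (p := fun x => decide (0 ≤ x))
  rw [hsplit, htake, List.length_drop] at *
  omega

lemma indsum_ge {Loc : Type} (s : Finset Loc) (f : Loc → ℝ) (P : Loc → Prop) (hP : ∀ x, 0 < f x → P x)
    (k : ℕ) (hk1 : 1 ≤ k) (hk : k ≤ s.card) (h : 0 < kthLargest (s.val.map f) k) :
    (k : ℝ) ≤ ∑ x ∈ s, if P x then (1:ℝ) else 0 := by
  have h1 := kth_pos_count _ k hk1 (by simpa using hk) h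
  rw [Multiset.countP_map] at h1
  have h2 : Multiset.card (Multiset.filter (fun a => 0 < f a) s.val)
      = (s.filter (fun a => 0 < f a)).card := by
    simp [Finset.card_filter, Multiset.countP_eq_card_filter, Finset.card]
  rw [h2] at h1
  have h3 : (s.filter (fun a => 0 < f a)).card ≤ (s.filter P).card :=
    Finset.card_le_card (Finset.monotone_filter_right s (fun x _ hx => hP x hx))
  rw [Finset.sum_boole]
  exact_mod_cast le_trans h1 h3

lemma indsum_le {Loc : Type} (s : Finset Loc) (f : Loc → ℝ) (P : Loc → Prop) (hP : ∀ x, P x → 0 ≤ f x)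
    (k : ℕ) (hk1 : 1 ≤ k) (hk : k ≤ s.card) (h : kthLargest (s.val.map f) k < 0) :
    ∑ x ∈ s, (if P x then (1:ℝ) else 0) ≤ (k : ℝ) - 1 := by
  have h1 := kth_neg_count _ k hk1 (by simpa using hk) h
  rw [Multiset.countP_map] at h1
  have h2 : Multiset.card (Multiset.filter (fun a => 0 ≤ f a) s.val)
      = (s.filter (fun a => 0 ≤ f a)).card := by
    simp [Finset.card_filter, Multiset.countP_eq_card_filter, Finset.card]
  rw [h2] at h1
  have h3 : (s.filter P).card ≤ (s.filter (fun a => 0 ≤ f a)).card :=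
    Finset.card_le_card (Finset.monotone_filter_right s (fun x _ hx => hP x hx))
  rw [Finset.sum_boole]
  have : (s.filter P).card ≤ k - 1 := le_trans h3 h1
  have hcast : ((s.filter P).card : ℝ) ≤ ((k - 1 : ℕ) : ℝ) := by exact_mod_cast this
  rw [Nat.cast_sub hk1] at hcast
  simpa using hcast


/-- Boolean satisfaction `(ω, t, l) ⊨ φ`. -/
def sat (F : Frame Dom Loc) (ω : Var → ℝ → Loc → ℝ) :
    SaSTL Var Dom → ℝ → Loc → Prop
  | .atom x c, t, l => c < ω x t l
  | .not φ, t, l => ¬ sat F ω φ t l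
  | .and φ ψ, t, l => sat F ω φ t l ∧ sat F ω ψ t l
  | .untl I φ ψ, t, l =>
      ∃ t' ∈ F.T, t' - t ∈ I ∧ sat F ω ψ t' l ∧
        ∀ t'' ∈ F.T, t < t'' → t'' < t' → sat F ω φ t'' l
  | .agg op D x c, t, l =>
      (match op with
        | .max => (F.nbr D l).sup' (F.nbr_ne D l) (fun l' => ω x t l')
        | .min => (F.nbr D l).inf' (F.nbr_ne D l) (fun l' => ω x t l')
        | .sum => ∑ l' ∈ F.nbr D l, ω x t l'
        | .avg => (∑ l' ∈ F.nbr D l, ω x t l') / (F.nbr D l).card) > c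
  | .cnt op D φ c, t, l =>
      (match op with
        | .max => (F.nbr D l).sup' (F.nbr_ne D l)
            (fun l' => if sat F ω φ t l' then (1 : ℝ) else 0)
        | .min => (F.nbr D l).inf' (F.nbr_ne D l)
            (fun l' => if sat F ω φ t l' then (1 : ℝ) else 0)
        | .sum => ∑ l' ∈ F.nbr D l, (if sat F ω φ t l' then (1 : ℝ) else 0)
        | .avg => (∑ l' ∈ F.nbr D l, (if sat F ω φ t l' then (1 : ℝ) else 0)) /
            (F.nbr D l).card) > c

/-- Quantitative semantics (robustness) `ρ(φ, ω, t, l)`. -/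
def rho (F : Frame Dom Loc) (ω : Var → ℝ → Loc → ℝ) :
    SaSTL Var Dom → ℝ → Loc → ℝ
  | .atom x c, t, l => ω x t l - c
  | .not φ, t, l => - rho F ω φ t l
  | .and φ ψ, t, l => min (rho F ω φ t l) (rho F ω ψ t l)
  | .untl I φ ψ, t, l =>
      if h : (F.T.filter (fun s => s - t ∈ I)).Nonempty then
        (F.T.filter (fun s => s - t ∈ I)).sup' h (fun t' =>
          if h' : (F.T.filter (fun s => t < s ∧ s < t')).Nonempty then
            min (rho F ω ψ t' l)
              ((F.T.filter (fun s => t < s ∧ s < t')).inf' h'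
                (fun t'' => rho F ω φ t'' l))
          else rho F ω ψ t' l)
      else 0
  | .agg op D x c, t, l =>
      match op with
      | .max => (F.nbr D l).sup' (F.nbr_ne D l) (fun l' => ω x t l') - c
      | .min => (F.nbr D l).inf' (F.nbr_ne D l) (fun l' => ω x t l') - c
      | .sum => ((∑ l' ∈ F.nbr D l, ω x t l') - c) / (F.nbr D l).card
      | .avg => (∑ l' ∈ F.nbr D l, ω x t l') / (F.nbr D l).card - c
  | .cnt op D φ c, t, l =>
      match op with
      | .max => (F.nbr D l).sup' (F.nbr_ne D l) (fun l' => rho F ω φ t l')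
      | .min => (F.nbr D l).inf' (F.nbr_ne D l) (fun l' => rho F ω φ t l')
      | .sum => kthLargest ((F.nbr D l).val.map (fun l' => rho F ω φ t l'))
          (⌊c⌋ + 1).toNat
      | .avg => kthLargest ((F.nbr D l).val.map (fun l' => rho F ω φ t l'))
          (⌊c * (F.nbr D l).card⌋ + 1).toNat

/-- Well-formedness assumptions on formulas: every until-interval is a bounded
interval of positive reals whose shifted intersection with the sample times is
nonempty, and the constants in counting subformulas satisfy `0 ≤ c < 1` for
`op ∈ {max, min, avg}` and `0 ≤ c < |L_D^l|` for `op = sum`. -/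
def WellFormed (F : Frame Dom Loc) : SaSTL Var Dom → Prop
  | .atom _ _ => True
  | .not φ => WellFormed F φ
  | .and φ ψ => WellFormed F φ ∧ WellFormed F ψ
  | .untl I φ ψ =>
      (I ⊆ Set.Ioi 0 ∧ BddAbove I ∧ I.OrdConnected) ∧
      (∀ t ∈ F.T, (F.T.filter (fun s => s - t ∈ I)).Nonempty) ∧
      WellFormed F φ ∧ WellFormed F ψ
  | .agg _ _ _ _ => True
  | .cnt op D φ c =>
      WellFormed F φ ∧
      (match op with
        | .sum => 0 ≤ c ∧ ∀ l : Loc, c < (F.nbr D l).card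
        | _ => 0 ≤ c ∧ c < 1)


lemma sastl_aux {Var Dom Loc : Type} (F : Frame Dom Loc) (ω : Var → ℝ → Loc → ℝ) :
    ∀ φ : SaSTL Var Dom, WellFormed F φ →
    ∀ t ∈ F.T, ∀ l, (0 < rho F ω φ t l → sat F ω φ t l) ∧
      (rho F ω φ t l < 0 → ¬ sat F ω φ t l) := by
  intro φ
  induction φ with
  | atom x c =>
    intro _ t ht l
    simp only [rho, sat]
    constructor <;> intro h <;> [linarith; (intro h'; linarith)]
  | not φ ih =>
    intro hφ t ht l
    simp only [WellFormed] at hφ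
    obtain ⟨h1, h2⟩ := ih hφ t ht l
    simp only [rho, sat]
    constructor
    · intro h
      exact h2 (by linarith)
    · intro h hn
      exact hn (h1 (by linarith))
  | and φ ψ ihφ ihψ =>
    intro hφ t ht l
    simp only [WellFormed] at hφ
    obtain ⟨a1, a2⟩ := ihφ hφ.1 t ht l
    obtain ⟨b1, b2⟩ := ihψ hφ.2 t ht l
    simp only [rho, sat, lt_min_iff, min_lt_iff]
    constructor
    · intro h
      exact ⟨a1 h.1, b1 h.2⟩
    · rintro (h | h) ⟨s1, s2⟩
      · exact a2 h s1
      · exact b2 h s2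
  | untl I φ ψ ihφ ihψ =>
    intro hφ t ht l
    simp only [WellFormed] at hφ
    obtain ⟨_, hne, hwφ, hwψ⟩ := hφ
    have hfil := hne t ht
    simp only [rho, sat, dif_pos hfil]
    constructor
    · intro h
      obtain ⟨t', ht', heq⟩ := Finset.exists_mem_eq_sup' hfil
        (fun t' => if h' : (F.T.filter (fun s => t < s ∧ s < t')).Nonempty then
            min (rho F ω ψ t' l)
              ((F.T.filter (fun s => t < s ∧ s < t')).inf' h' (fun t'' => rho F ω φ t'' l))
          else rho F ω ψ t' l)
      rw [heq] at h
      rw [Finset.mem_filter] at ht'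
      refine ⟨t', ht'.1, ht'.2, ?_⟩
      by_cases h' : (F.T.filter (fun s => t < s ∧ s < t')).Nonempty
      · rw [dif_pos h'] at h
        rw [lt_min_iff] at h
        refine ⟨(ihψ hwψ t' ht'.1 l).1 h.1, ?_⟩
        intro t'' ht'' h1 h2
        have hmem : t'' ∈ F.T.filter (fun s => t < s ∧ s < t') :=
          Finset.mem_filter.mpr ⟨ht'', h1, h2⟩
        have hle := Finset.inf'_le (fun t'' => rho F ω φ t'' l) hmem
        exact (ihφ hwφ t'' ht'' l).1 (lt_of_lt_of_le h.2 hle)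
      · rw [dif_neg h'] at h
        refine ⟨(ihψ hwψ t' ht'.1 l).1 h, ?_⟩
        intro t'' ht'' h1 h2
        exact absurd ⟨t'', Finset.mem_filter.mpr ⟨ht'', h1, h2⟩⟩ h'
    · intro h hsat
      obtain ⟨t', ht'T, htI, hsψ, hall⟩ := hsat
      have hmem : t' ∈ F.T.filter (fun s => s - t ∈ I) :=
        Finset.mem_filter.mpr ⟨ht'T, htI⟩
      have hle := Finset.le_sup' (f := fun t' =>
          if h' : (F.T.filter (fun s => t < s ∧ s < t')).Nonempty then
            min (rho F ω ψ t' l)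
              ((F.T.filter (fun s => t < s ∧ s < t')).inf' h' (fun t'' => rho F ω φ t'' l))
          else rho F ω ψ t' l) hmem
      have hval := lt_of_le_of_lt hle h
      by_cases h' : (F.T.filter (fun s => t < s ∧ s < t')).Nonempty
      · rw [dif_pos h', min_lt_iff] at hval
        rcases hval with hval | hval
        · exact (ihψ hwψ t' ht'T l).2 hval hsψ
        · obtain ⟨t'', ht'', heq⟩ := Finset.exists_mem_eq_inf' h' (fun t'' => rho F ω φ t'' l)
          rw [heq] at hval
          rw [Finset.mem_filter] at ht''
          exact (ihφ hwφ t'' ht''.1 l).2 hval (hall t'' ht''.1 ht''.2.1 ht''.2.2)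
      · rw [dif_neg h'] at hval
        exact (ihψ hwψ t' ht'T l).2 hval hsψ
  | agg op D x c =>
    intro _ t ht l
    have hcard : (0:ℝ) < (F.nbr D l).card := by
      exact_mod_cast Finset.card_pos.mpr (F.nbr_ne D l)
    cases op <;> simp only [rho, sat, gt_iff_lt] <;> constructor <;> intro h
    · linarith
    · intro h'; linarith
    · linarith
    · intro h'; linarith
    · rw [lt_div_iff₀ hcard] at h; linarith
    · intro h'; rw [div_lt_iff₀ hcard] at h; linarith
    · linarith
    · intro h'; linarith
  | cnt op D φ c ih =>
    intro hφ t ht l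
    simp only [WellFormed] at hφ
    obtain ⟨hwφ, hc⟩ := hφ
    have ihl := fun l' => ih hwφ t ht l'
    cases op
    · -- max
      simp only [rho, sat, gt_iff_lt] at *
      constructor
      · intro h
        obtain ⟨l', hl', heq⟩ := Finset.exists_mem_eq_sup' (F.nbr_ne D l)
          (fun l' => rho F ω φ t l')
        rw [heq] at h
        have hsat := (ihl l').1 h
        have hle := Finset.le_sup' (fun l' => if sat F ω φ t l' then (1:ℝ) else 0) hl'
        rw [if_pos hsat] at hle
        linarith [hc.2]
      · intro h hs
        have hall : ∀ l' ∈ F.nbr D l, ¬ sat F ω φ t l' := by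
          intro l' hl'
          have := Finset.le_sup' (fun l' => rho F ω φ t l') hl'
          exact (ihl l').2 (lt_of_le_of_lt this h)
        have : (F.nbr D l).sup' (F.nbr_ne D l)
            (fun l' => if sat F ω φ t l' then (1:ℝ) else 0) ≤ 0 := by
          apply Finset.sup'_le
          intro l' hl'
          rw [if_neg (hall l' hl')]
        linarith [hc.1]
    · -- min
      simp only [rho, sat, gt_iff_lt] at *
      constructor
      · intro h
        have hall : ∀ l' ∈ F.nbr D l, sat F ω φ t l' := by
          intro l' hl'
          have := Finset.inf'_le (fun l' => rho F ω φ t l') hl'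
          exact (ihl l').1 (lt_of_lt_of_le h this)
        have : (1:ℝ) ≤ (F.nbr D l).inf' (F.nbr_ne D l)
            (fun l' => if sat F ω φ t l' then (1:ℝ) else 0) := by
          apply Finset.le_inf'
          intro l' hl'
          rw [if_pos (hall l' hl')]
        linarith [hc.2]
      · intro h hs
        obtain ⟨l', hl', heq⟩ := Finset.exists_mem_eq_inf' (F.nbr_ne D l)
          (fun l' => rho F ω φ t l')
        rw [heq] at h
        have hns := (ihl l').2 h
        have hle := Finset.inf'_le (fun l' => if sat F ω φ t l' then (1:ℝ) else 0) hl'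
        rw [if_neg hns] at hle
        linarith [hc.1]
    · -- sum
      have h0 : 0 ≤ ⌊c⌋ := Int.floor_nonneg.mpr hc.1
      set k := (⌊c⌋ + 1).toNat with hk
      have hkz : (k:ℤ) = ⌊c⌋ + 1 := by
        rw [hk]; exact Int.toNat_of_nonneg (by omega)
      have hkc : (k:ℝ) = (⌊c⌋:ℝ) + 1 := by exact_mod_cast hkz
      have hk1 : 1 ≤ k := by omega
      have hkle : k ≤ (F.nbr D l).card := by
        have h1 : c < ((F.nbr D l).card : ℝ) := hc.2 l
        have h2 : ⌊c⌋ < ((F.nbr D l).card : ℤ) := by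
          rw [Int.floor_lt]; exact_mod_cast h1
        omega
      simp only [rho, sat, gt_iff_lt]
      constructor
      · intro h
        have hge : (k:ℝ) ≤ ∑ l' ∈ F.nbr D l, if sat F ω φ t l' then (1:ℝ) else 0 :=
          indsum_ge (F.nbr D l) (fun l' => rho F ω φ t l') (fun l' => sat F ω φ t l')
            (fun l' hl' => (ihl l').1 hl') k hk1 hkle h
        have hck : c < (k:ℝ) := by rw [hkc]; exact Int.lt_floor_add_one c
        linarith
      · intro h hs
        have hle : (∑ l' ∈ F.nbr D l, if sat F ω φ t l' then (1:ℝ) else 0) ≤ (k:ℝ) - 1 :=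
          indsum_le (F.nbr D l) (fun l' => rho F ω φ t l') (fun l' => sat F ω φ t l')
            (fun l' hl' => not_lt.mp (fun hneg => (ihl l').2 hneg hl')) k hk1 hkle h
        have hck : (k:ℝ) - 1 ≤ c := by rw [hkc]; linarith [Int.floor_le c]
        linarith
    · -- avg
      have hcard : (0:ℝ) < (F.nbr D l).card := by
        exact_mod_cast Finset.card_pos.mpr (F.nbr_ne D l)
      have hc0 : 0 ≤ c * (F.nbr D l).card := mul_nonneg hc.1 (le_of_lt hcard)
      have h0 : 0 ≤ ⌊c * (F.nbr D l).card⌋ := Int.floor_nonneg.mpr hc0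
      set k := (⌊c * (F.nbr D l).card⌋ + 1).toNat with hk
      have hkz : (k:ℤ) = ⌊c * (F.nbr D l).card⌋ + 1 := by
        rw [hk]; exact Int.toNat_of_nonneg (by omega)
      have hkc : (k:ℝ) = (⌊c * (F.nbr D l).card⌋:ℝ) + 1 := by exact_mod_cast hkz
      have hk1 : 1 ≤ k := by omega
      have hkle : k ≤ (F.nbr D l).card := by
        have h1 : c * ((F.nbr D l).card : ℝ) < ((F.nbr D l).card : ℝ) := by
          nlinarith [hc.2]
        have h2 : ⌊c * (F.nbr D l).card⌋ < ((F.nbr D l).card : ℤ) := by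
          rw [Int.floor_lt]; exact_mod_cast h1
        omega
      simp only [rho, sat, gt_iff_lt]
      constructor
      · intro h
        have hge : (k:ℝ) ≤ ∑ l' ∈ F.nbr D l, if sat F ω φ t l' then (1:ℝ) else 0 :=
          indsum_ge (F.nbr D l) (fun l' => rho F ω φ t l') (fun l' => sat F ω φ t l')
            (fun l' hl' => (ihl l').1 hl') k hk1 hkle h
        have hck : c * (F.nbr D l).card < (k:ℝ) := by
          rw [hkc]; exact Int.lt_floor_add_one _
        rw [lt_div_iff₀ hcard]
        linarith
      · intro h hs
        have hle : (∑ l' ∈ F.nbr D l, if sat F ω φ t l' then (1:ℝ) else 0) ≤ (k:ℝ) - 1 :=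
          indsum_le (F.nbr D l) (fun l' => rho F ω φ t l') (fun l' => sat F ω φ t l')
            (fun l' hl' => not_lt.mp (fun hneg => (ihl l').2 hneg hl')) k hk1 hkle h
        have hck : (k:ℝ) - 1 ≤ c * (F.nbr D l).card := by
          rw [hkc]; linarith [Int.floor_le (c * ((F.nbr D l).card:ℝ))]
        rw [lt_div_iff₀ hcard] at hs
        linarith

/-- **Soundness of the SaSTL quantitative semantics**: for every SaSTL formula
`φ`, every spatial-temporal signal `ω`, every sample time `t ∈ 𝕋` and every
location `l ∈ L`, if `ρ(φ,ω,t,l) > 0` then `(ω,t,l) ⊨ φ`, and if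
`ρ(φ,ω,t,l) < 0` then `(ω,t,l) ⊭ φ`. -/
theorem sastl_quantitative_soundness
    [Fintype Var] [Fintype Loc] [Nonempty Loc]
    (F : Frame Dom Loc) (ω : Var → ℝ → Loc → ℝ)
    (φ : SaSTL Var Dom) (hφ : WellFormed F φ)
    (t : ℝ) (ht : t ∈ F.T) (l : Loc) :
    (0 < rho F ω φ t l → sat F ω φ t l) ∧
    (rho F ω φ t l < 0 → ¬ sat F ω φ t l) := by
  exact sastl_aux F ω φ hφ t ht l

end
end

section
/- Correctness of the SaSTL quantitative semantics: for every SaSTL formula φ, any two spatial-temporal signals ω and ω' over the same time and spatial domains, every sample time t in 𝕋 and every location l in L, if (ω,t,l) ⊨ φ and ‖ω − ω'‖_∞ < ρ(φ,ω,t,l), then (ω',t,l) ⊨ φ. -/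
open scoped Classical

noncomputable section

variable {Var Dom Loc : Type}

/-- Sup-norm distance `‖ω − ω'‖_∞` between two spatial-temporal signals:
the maximum over all `(x, t, l) ∈ X × 𝕋 × L` of `|ω(x,t,l) − ω'(x,t,l)|`. -/
def supDist [Fintype Var] [Nonempty Var] [Fintype Loc] [Nonempty Loc]
    (F : Frame Dom Loc) (ω ω' : Var → ℝ → Loc → ℝ) : ℝ :=
  (Finset.univ : Finset Var).sup' Finset.univ_nonempty fun x =>
    F.T.sup' F.T_ne fun t =>
      (Finset.univ : Finset Loc).sup' Finset.univ_nonempty fun l =>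
        |ω x t l - ω' x t l|


/- ------------------ auxiliary lemmas for the proof ------------------- -/

lemma kth_sorted_facts (m : Multiset ℝ) (k : ℕ) (hk : 0 < k) (hkn : k ≤ Multiset.card m) :
    k ≤ Multiset.card (Multiset.filter (fun v => kthLargest m k ≤ v) m) ∧
    Multiset.card (Multiset.filter (fun v => kthLargest m k < v) m) ≤ k - 1 := by
  classical
  set s := Multiset.sort m (· ≤ ·) with hs
  have hlen : s.length = Multiset.card m := Multiset.length_sort _
  have hperm : (s : Multiset ℝ) = m := Multiset.sort_eq _ _
  have hsorted : s.Pairwise (· ≤ ·) := Multiset.pairwise_sort _ _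
  set j := Multiset.card m - k with hj
  have hjlt : j < s.length := by omega
  have hkth : kthLargest m k = s[j] := List.getD_eq_getElem s 0 hjlt
  have hmono : ∀ (i1 i2 : ℕ) (h1 : i1 < s.length) (h2 : i2 < s.length), i1 ≤ i2 → s[i1] ≤ s[i2] := by
    intro i1 i2 h1 h2 hle
    rcases eq_or_lt_of_le hle with h | h
    · subst h; rfl
    · exact List.pairwise_iff_getElem.mp hsorted i1 i2 h1 h2 h
  constructor
  · have hdropsub : ((s.drop j : List ℝ) : Multiset ℝ) ≤ m := by
      rw [← hperm]
      exact Multiset.coe_le.mpr (List.drop_sublist j s).subperm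
    have hall : ∀ v ∈ (s.drop j : List ℝ), kthLargest m k ≤ v := by
      intro v hv
      obtain ⟨i, hi, rfl⟩ := List.mem_iff_getElem.mp hv
      rw [List.getElem_drop]
      exact hkth ▸ hmono j (j + i) hjlt (by simp at hi; omega) (by omega)
    have hfeq : Multiset.filter (fun v => kthLargest m k ≤ v) ((s.drop j : List ℝ) : Multiset ℝ)
        = ((s.drop j : List ℝ) : Multiset ℝ) := Multiset.filter_eq_self.mpr (by simpa using hall)
    have := Multiset.card_le_card (Multiset.filter_le_filter (fun v => kthLargest m k ≤ v) hdropsub)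
    rw [hfeq] at this
    simp only [Multiset.coe_card, List.length_drop] at this
    omega
  · have htakesub : ((s.take (j+1) : List ℝ) : Multiset ℝ) ≤ m := by
      rw [← hperm]
      exact Multiset.coe_le.mpr (List.take_sublist (j+1) s).subperm
    have hall : ∀ v ∈ (s.take (j+1) : List ℝ), ¬ kthLargest m k < v := by
      intro v hv
      obtain ⟨i, hi, rfl⟩ := List.mem_iff_getElem.mp hv
      rw [List.getElem_take]
      have hi' : i < j + 1 := by simp at hi; omega
      exact not_lt.mpr (hkth ▸ hmono i j (by omega) hjlt (by omega))
    have hfeq : Multiset.filter (fun v => ¬ kthLargest m k < v) ((s.take (j+1) : List ℝ) : Multiset ℝ)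
        = ((s.take (j+1) : List ℝ) : Multiset ℝ) := Multiset.filter_eq_self.mpr (by simpa using hall)
    have h1 := Multiset.card_le_card (Multiset.filter_le_filter (fun v => ¬ kthLargest m k < v) htakesub)
    rw [hfeq] at h1
    simp only [Multiset.coe_card, List.length_take] at h1
    have h2 := congrArg Multiset.card (Multiset.filter_add_not (fun v => kthLargest m k < v) m)
    rw [Multiset.card_add] at h2
    omega

lemma abs_le_supDist [Fintype Var] [Nonempty Var] [Fintype Loc] [Nonempty Loc]
    (F : Frame Dom Loc) (ω ω' : Var → ℝ → Loc → ℝ) {x : Var} {t : ℝ} {l : Loc}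
    (ht : t ∈ F.T) : |ω x t l - ω' x t l| ≤ supDist F ω ω' := by
  have h1 : |ω x t l - ω' x t l| ≤
      (Finset.univ : Finset Loc).sup' Finset.univ_nonempty (fun l => |ω x t l - ω' x t l|) :=
    Finset.le_sup' (f := fun l => |ω x t l - ω' x t l|) (Finset.mem_univ l)
  have h2 := Finset.le_sup' (f := fun t => (Finset.univ : Finset Loc).sup' Finset.univ_nonempty
      (fun l => |ω x t l - ω' x t l|)) ht
  have h3 := Finset.le_sup' (f := fun x => F.T.sup' F.T_ne fun t =>
      (Finset.univ : Finset Loc).sup' Finset.univ_nonempty fun l => |ω x t l - ω' x t l|)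
    (Finset.mem_univ x)
  exact h1.trans (h2.trans h3)

lemma supDist_nonneg [Fintype Var] [Nonempty Var] [Fintype Loc] [Nonempty Loc]
    (F : Frame Dom Loc) (ω ω' : Var → ℝ → Loc → ℝ) : 0 ≤ supDist F ω ω' := by
  obtain ⟨t, ht⟩ := F.T_ne
  exact (abs_nonneg _).trans (abs_le_supDist (x := Classical.arbitrary Var)
    (l := Classical.arbitrary Loc) F ω ω' ht)

lemma sastl_key [Fintype Var] [Nonempty Var] [Fintype Loc] [Nonempty Loc]
    (F : Frame Dom Loc) (ω ω' : Var → ℝ → Loc → ℝ) (φ : SaSTL Var Dom) :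
    WellFormed F φ → ∀ t ∈ F.T, ∀ l : Loc,
      (supDist F ω ω' < rho F ω φ t l → sat F ω' φ t l) ∧
      (supDist F ω ω' < - rho F ω φ t l → ¬ sat F ω' φ t l) := by
  classical
  set d := supDist F ω ω' with hd
  have hd0 : 0 ≤ d := supDist_nonneg F ω ω'
  induction φ with
  | atom x c =>
    intro _ t ht l
    have habs := abs_le.mp (abs_le_supDist (x := x) (l := l) F ω ω' ht)
    constructor
    · intro h; simp only [sat]; simp only [rho] at h; linarith [habs.1]
    · intro h; simp only [sat]; simp only [rho] at h; push_neg; linarith [habs.2]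
  | not φ ih =>
    intro hφ t ht l
    obtain ⟨h1, h2⟩ := ih hφ t ht l
    constructor
    · intro h
      simp only [rho, lt_neg] at h
      simp only [sat]
      exact h2 (by simpa [lt_neg] using h)
    · intro h
      simp only [rho, neg_neg] at h
      simp only [sat, not_not]
      exact h1 h
  | and φ ψ ihφ ihψ =>
    intro hφ t ht l
    obtain ⟨hwφ, hwψ⟩ := hφ
    constructor
    · intro h
      simp only [rho, lt_min_iff] at h
      exact ⟨(ihφ hwφ t ht l).1 h.1, (ihψ hwψ t ht l).1 h.2⟩
    · intro h
      simp only [rho, lt_neg, min_lt_iff] at h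
      rcases h with h | h
      · intro hc; exact (ihφ hwφ t ht l).2 (by simpa [lt_neg] using h) hc.1
      · intro hc; exact (ihψ hwψ t ht l).2 (by simpa [lt_neg] using h) hc.2
  | untl I φ ψ ihφ ihψ =>
    intro hw t ht l
    obtain ⟨hI, hne, hwφ, hwψ⟩ := hw
    have hfil := hne t ht
    constructor
    · intro h
      simp only [rho, dif_pos hfil] at h
      rw [Finset.lt_sup'_iff] at h
      obtain ⟨t', ht'f, hlt⟩ := h
      have ht'' := Finset.mem_filter.mp ht'f
      by_cases h' : (F.T.filter (fun s => t < s ∧ s < t')).Nonempty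
      · rw [dif_pos h'] at hlt
        rw [lt_min_iff] at hlt
        refine ⟨t', ht''.1, ht''.2, (ihψ hwψ t' ht''.1 l).1 hlt.1, ?_⟩
        intro t'' ht''T h1 h2
        have hmem : t'' ∈ F.T.filter (fun s => t < s ∧ s < t') :=
          Finset.mem_filter.mpr ⟨ht''T, h1, h2⟩
        exact (ihφ hwφ t'' ht''T l).1 (hlt.2.trans_le (Finset.inf'_le _ hmem))
      · rw [dif_neg h'] at hlt
        refine ⟨t', ht''.1, ht''.2, (ihψ hwψ t' ht''.1 l).1 hlt, ?_⟩
        intro t'' ht''T h1 h2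
        exact absurd ⟨t'', Finset.mem_filter.mpr ⟨ht''T, h1, h2⟩⟩ h'
    · intro h hsat'
      simp only [rho, dif_pos hfil, lt_neg] at h
      obtain ⟨t', ht'T, htI, hψ', hφ'⟩ := hsat'
      have ht'f : t' ∈ F.T.filter (fun s => s - t ∈ I) := Finset.mem_filter.mpr ⟨ht'T, htI⟩
      have hle := Finset.le_sup' (fun t' =>
          if h' : (F.T.filter (fun s => t < s ∧ s < t')).Nonempty then
            min (rho F ω ψ t' l)
              ((F.T.filter (fun s => t < s ∧ s < t')).inf' h' (fun t'' => rho F ω φ t'' l))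
          else rho F ω ψ t' l) ht'f
      have hlt : _ < -d := lt_of_le_of_lt hle h
      by_cases h' : (F.T.filter (fun s => t < s ∧ s < t')).Nonempty
      · rw [dif_pos h'] at hlt
        rw [min_lt_iff] at hlt
        rcases hlt with h1 | h1
        · exact (ihψ hwψ t' ht'T l).2 (by simpa [lt_neg] using h1) hψ'
        · obtain ⟨t'', ht''f, heq⟩ := Finset.exists_mem_eq_inf' h' (fun t'' => rho F ω φ t'' l)
          rw [heq] at h1
          have hm := Finset.mem_filter.mp ht''f
          exact (ihφ hwφ t'' hm.1 l).2 (by simpa [lt_neg] using h1)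
            (hφ' t'' hm.1 hm.2.1 hm.2.2)
      · rw [dif_neg h'] at hlt
        exact (ihψ hwψ t' ht'T l).2 (by simpa [lt_neg] using hlt) hψ'
  | agg op D x c =>
    intro _ t ht l
    have habs : ∀ l' : Loc, ω x t l' - ω' x t l' ≤ d ∧ ω' x t l' - ω x t l' ≤ d := by
      intro l'
      have := abs_le.mp (abs_le_supDist (x := x) (l := l') F ω ω' ht)
      constructor <;> linarith [this.1, this.2]
    have hcardpos : (0 : ℝ) < (F.nbr D l).card := by
      exact_mod_cast Finset.card_pos.mpr (F.nbr_ne D l)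
    have hsumlb : ∑ l' ∈ F.nbr D l, ω x t l' - (F.nbr D l).card * d ≤ ∑ l' ∈ F.nbr D l, ω' x t l' := by
      have := Finset.sum_le_card_nsmul (F.nbr D l) (fun l' => ω x t l' - ω' x t l') d
        (fun l' _ => (habs l').1)
      rw [Finset.sum_sub_distrib, nsmul_eq_mul] at this
      linarith
    have hsumub : ∑ l' ∈ F.nbr D l, ω' x t l' ≤ ∑ l' ∈ F.nbr D l, ω x t l' + (F.nbr D l).card * d := by
      have := Finset.sum_le_card_nsmul (F.nbr D l) (fun l' => ω' x t l' - ω x t l') d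
        (fun l' _ => (habs l').2)
      rw [Finset.sum_sub_distrib, nsmul_eq_mul] at this
      linarith
    cases op with
    | max =>
      constructor
      · intro h
        simp only [rho] at h
        obtain ⟨l', hl', heq⟩ := Finset.exists_mem_eq_sup' (F.nbr_ne D l) (fun l' => ω x t l')
        rw [heq] at h
        simp only [sat]
        exact lt_of_lt_of_le (by linarith [(habs l').1]) (Finset.le_sup' _ hl')
      · intro h hsat'
        simp only [rho, lt_neg, neg_sub] at h
        simp only [sat] at hsat'
        obtain ⟨l', hl', heq⟩ := Finset.exists_mem_eq_sup' (F.nbr_ne D l) (fun l' => ω' x t l')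
        rw [heq] at hsat'
        have := Finset.le_sup' (fun l' => ω x t l') hl'
        linarith [(habs l').2]
    | min =>
      constructor
      · intro h
        simp only [rho] at h
        simp only [sat]
        rw [gt_iff_lt, Finset.lt_inf'_iff]
        intro l' hl'
        have := Finset.inf'_le (fun l' => ω x t l') hl'
        linarith [(habs l').1]
      · intro h hsat'
        simp only [rho, lt_neg, neg_sub] at h
        simp only [sat] at hsat'
        obtain ⟨l', hl', heq⟩ := Finset.exists_mem_eq_inf' (F.nbr_ne D l) (fun l' => ω x t l')
        have h2 := Finset.inf'_le (fun l' => ω' x t l') hl'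
        rw [heq] at h
        linarith [(habs l').2, lt_of_lt_of_le hsat' h2]
    | sum =>
      constructor
      · intro h
        simp only [rho, lt_div_iff₀ hcardpos] at h
        simp only [sat]
        nlinarith
      · intro h hsat'
        simp only [rho, lt_neg] at h
        have h2 : (∑ l' ∈ F.nbr D l, ω x t l' - c) < -d * (F.nbr D l).card := by
          have := (div_lt_iff₀ hcardpos).mp h
          linarith
        simp only [sat] at hsat'
        nlinarith
    | avg =>
      constructor
      · intro h
        simp only [rho] at h
        simp only [sat]
        rw [gt_iff_lt, lt_div_iff₀ hcardpos]
        have h2 : (d + c) * (F.nbr D l).card < ∑ l' ∈ F.nbr D l, ω x t l' :=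
          (lt_div_iff₀ hcardpos).mp (by linarith)
        nlinarith
      · intro h hsat'
        simp only [rho, lt_neg, neg_sub] at h
        have h2 : ∑ l' ∈ F.nbr D l, ω x t l' < (c - d) * (F.nbr D l).card :=
          (div_lt_iff₀ hcardpos).mp (by linarith)
        simp only [sat] at hsat'
        rw [gt_iff_lt, lt_div_iff₀ hcardpos] at hsat'
        nlinarith
  | cnt op D φ c ih =>
    intro hw t ht l
    obtain ⟨hwφ, hc⟩ := hw
    cases op with
    | max =>
      obtain ⟨hc0, hc1⟩ := hc
      constructor
      · intro h
        simp only [rho] at h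
        rw [Finset.lt_sup'_iff] at h
        obtain ⟨l', hl', hlt⟩ := h
        have hsat' := (ih hwφ t ht l').1 hlt
        simp only [sat]
        have h1 : (1 : ℝ) ≤ (F.nbr D l).sup' (F.nbr_ne D l)
            (fun l' => if sat F ω' φ t l' then (1 : ℝ) else 0) := by
          have := Finset.le_sup' (fun l' => if sat F ω' φ t l' then (1 : ℝ) else 0) hl'
          rwa [if_pos hsat'] at this
        linarith
      · intro h hsat'
        simp only [rho, lt_neg] at h
        simp only [sat] at hsat'
        have hall : ∀ l' ∈ F.nbr D l, (if sat F ω' φ t l' then (1:ℝ) else 0) ≤ 0 := by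
          intro l' hl'
          have h1 : rho F ω φ t l' < -d :=
            lt_of_le_of_lt (Finset.le_sup' (fun l' => rho F ω φ t l') hl') h
          rw [if_neg ((ih hwφ t ht l').2 (by linarith))]
        have := Finset.sup'_le (F.nbr_ne D l) _ hall
        linarith [lt_of_lt_of_le hsat' this]
    | min =>
      obtain ⟨hc0, hc1⟩ := hc
      constructor
      · intro h
        simp only [rho] at h
        simp only [sat]
        have hall : ∀ l' ∈ F.nbr D l, (1:ℝ) ≤ (if sat F ω' φ t l' then (1:ℝ) else 0) := by
          intro l' hl'
          have h1 : d < rho F ω φ t l' :=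
            lt_of_lt_of_le h (Finset.inf'_le (fun l' => rho F ω φ t l') hl')
          rw [if_pos ((ih hwφ t ht l').1 h1)]
        have := Finset.le_inf' (F.nbr_ne D l) _ hall
        linarith
      · intro h hsat'
        simp only [rho, lt_neg] at h
        simp only [sat] at hsat'
        obtain ⟨l', hl', heq⟩ := Finset.exists_mem_eq_inf' (F.nbr_ne D l)
          (fun l' => rho F ω φ t l')
        rw [heq] at h
        have hns := (ih hwφ t ht l').2 (by linarith)
        have := Finset.inf'_le (fun l' => if sat F ω' φ t l' then (1:ℝ) else 0) hl'
        rw [if_neg hns] at this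
        linarith [lt_of_lt_of_le hsat' this]
    | sum =>
      obtain ⟨hc0, hcn⟩ := hc
      set S := F.nbr D l with hS
      set n := S.card with hn
      have hnpos : 0 < n := Finset.card_pos.mpr (F.nbr_ne D l)
      have hfl0 : (0:ℤ) ≤ ⌊c⌋ := Int.floor_nonneg.mpr hc0
      set k := (⌊c⌋ + 1).toNat with hk
      have hk1 : 0 < k := by omega
      have hkn : k ≤ n := by
        have h2 : ⌊c⌋ < (n:ℤ) := Int.floor_lt.mpr (by exact_mod_cast hcn l)
        omega
      set m := S.val.map (fun l' => rho F ω φ t l') with hm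
      have hmcard : Multiset.card m = n := by simp [hm, hn]
      obtain ⟨hge, hgt⟩ := kth_sorted_facts m k hk1 (by omega)
      have hkZ : (k:ℤ) = ⌊c⌋ + 1 := by rw [hk]; exact Int.toNat_of_nonneg (by omega)
      have hkR : (k:ℝ) = (⌊c⌋:ℝ) + 1 := by exact_mod_cast congrArg (Int.cast : ℤ → ℝ) hkZ
      have hkey : ∀ (q : ℝ → Prop), Multiset.card (Multiset.filter q m)
          = (S.filter (fun l' => q (rho F ω φ t l'))).card := by
        intro q
        rw [Finset.card_def, Finset.filter_val, hm, ← Multiset.countP_eq_card_filter,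
          Multiset.countP_map]
      constructor
      · intro h
        simp only [rho] at h
        simp only [sat, Finset.sum_boole]
        have hsub : S.filter (fun l' => kthLargest m k ≤ rho F ω φ t l') ⊆
            S.filter (fun l' => sat F ω' φ t l') := by
          intro l' hl'
          rw [Finset.mem_filter] at hl' ⊢
          exact ⟨hl'.1, (ih hwφ t ht l').1 (lt_of_lt_of_le h hl'.2)⟩
        have hcount : k ≤ (S.filter (fun l' => sat F ω' φ t l')).card := by
          have := hkey (fun v => kthLargest m k ≤ v)
          rw [this] at hge
          exact hge.trans (Finset.card_le_card hsub)
        have hck : c < (k:ℝ) := by rw [hkR]; exact Int.lt_floor_add_one c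
        calc c < (k:ℝ) := hck
        _ ≤ _ := by exact_mod_cast hcount
      · intro h hsat'
        simp only [rho, lt_neg] at h
        simp only [sat, Finset.sum_boole] at hsat'
        have hsub : S.filter (fun l' => sat F ω' φ t l') ⊆
            S.filter (fun l' => kthLargest m k < rho F ω φ t l') := by
          intro l' hl'
          rw [Finset.mem_filter] at hl' ⊢
          refine ⟨hl'.1, ?_⟩
          by_contra hcon
          push_neg at hcon
          exact (ih hwφ t ht l').2 (by linarith) hl'.2
        have hcount : (S.filter (fun l' => sat F ω' φ t l')).card ≤ k - 1 := by
          have := hkey (fun v => kthLargest m k < v)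
          rw [this] at hgt
          exact (Finset.card_le_card hsub).trans hgt
        have hle : ((S.filter (fun l' => sat F ω' φ t l')).card : ℝ) ≤ c := by
          have h1 : ((S.filter (fun l' => sat F ω' φ t l')).card : ℝ) ≤ ((k:ℝ) - 1) := by
            have h2 : ((k - 1 : ℕ) : ℝ) = (k:ℝ) - 1 := by
              push_cast [Nat.cast_sub hk1]
              ring
            rw [← h2]; exact_mod_cast hcount
          have h3 : (⌊c⌋:ℝ) ≤ c := Int.floor_le c
          linarith [hkR]
        linarith [lt_of_lt_of_le hsat' hle]
    | avg =>
      obtain ⟨hc0, hc1⟩ := hc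
      set S := F.nbr D l with hS
      set n := S.card with hn
      have hnpos : 0 < n := Finset.card_pos.mpr (F.nbr_ne D l)
      have hnposR : (0:ℝ) < (n:ℝ) := by exact_mod_cast hnpos
      have hcn0 : (0:ℝ) ≤ c * n := mul_nonneg hc0 (by positivity)
      have hfl0 : (0:ℤ) ≤ ⌊c * (n:ℝ)⌋ := Int.floor_nonneg.mpr hcn0
      set k := (⌊c * (n:ℝ)⌋ + 1).toNat with hk
      have hk1 : 0 < k := by omega
      have hkn : k ≤ n := by
        have h2 : ⌊c * (n:ℝ)⌋ < (n:ℤ) := Int.floor_lt.mpr (by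
          push_cast
          nlinarith)
        omega
      set m := S.val.map (fun l' => rho F ω φ t l') with hm
      have hmcard : Multiset.card m = n := by simp [hm, hn]
      obtain ⟨hge, hgt⟩ := kth_sorted_facts m k hk1 (by omega)
      have hkZ : (k:ℤ) = ⌊c * (n:ℝ)⌋ + 1 := by rw [hk]; exact Int.toNat_of_nonneg (by omega)
      have hkR : (k:ℝ) = (⌊c * (n:ℝ)⌋:ℝ) + 1 := by exact_mod_cast congrArg (Int.cast : ℤ → ℝ) hkZ
      have hkey : ∀ (q : ℝ → Prop), Multiset.card (Multiset.filter q m)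
          = (S.filter (fun l' => q (rho F ω φ t l'))).card := by
        intro q
        rw [Finset.card_def, Finset.filter_val, hm, ← Multiset.countP_eq_card_filter,
          Multiset.countP_map]
      constructor
      · intro h
        simp only [rho] at h
        simp only [sat, Finset.sum_boole]
        rw [gt_iff_lt, lt_div_iff₀ hnposR]
        have hsub : S.filter (fun l' => kthLargest m k ≤ rho F ω φ t l') ⊆
            S.filter (fun l' => sat F ω' φ t l') := by
          intro l' hl'
          rw [Finset.mem_filter] at hl' ⊢
          exact ⟨hl'.1, (ih hwφ t ht l').1 (lt_of_lt_of_le h hl'.2)⟩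
        have hcount : k ≤ (S.filter (fun l' => sat F ω' φ t l')).card := by
          have := hkey (fun v => kthLargest m k ≤ v)
          rw [this] at hge
          exact hge.trans (Finset.card_le_card hsub)
        have hck : c * (n:ℝ) < (k:ℝ) := by rw [hkR]; exact Int.lt_floor_add_one _
        calc c * (n:ℝ) < (k:ℝ) := hck
        _ ≤ _ := by exact_mod_cast hcount
      · intro h hsat'
        simp only [rho, lt_neg] at h
        simp only [sat, Finset.sum_boole] at hsat'
        rw [gt_iff_lt, lt_div_iff₀ hnposR] at hsat'
        have hsub : S.filter (fun l' => sat F ω' φ t l') ⊆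
            S.filter (fun l' => kthLargest m k < rho F ω φ t l') := by
          intro l' hl'
          rw [Finset.mem_filter] at hl' ⊢
          refine ⟨hl'.1, ?_⟩
          by_contra hcon
          push_neg at hcon
          exact (ih hwφ t ht l').2 (by linarith) hl'.2
        have hcount : (S.filter (fun l' => sat F ω' φ t l')).card ≤ k - 1 := by
          have := hkey (fun v => kthLargest m k < v)
          rw [this] at hgt
          exact (Finset.card_le_card hsub).trans hgt
        have hle : ((S.filter (fun l' => sat F ω' φ t l')).card : ℝ) ≤ c * (n:ℝ) := by
          have h1 : ((S.filter (fun l' => sat F ω' φ t l')).card : ℝ) ≤ ((k:ℝ) - 1) := by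
            have h2 : ((k - 1 : ℕ) : ℝ) = (k:ℝ) - 1 := by
              push_cast [Nat.cast_sub hk1]
              ring
            rw [← h2]; exact_mod_cast hcount
          have h3 : (⌊c * (n:ℝ)⌋:ℝ) ≤ c * (n:ℝ) := Int.floor_le _
          linarith [hkR]
        linarith [lt_of_lt_of_le hsat' hle]

/-- **Correctness of the SaSTL quantitative semantics**: for every SaSTL
formula `φ`, any two spatial-temporal signals `ω`, `ω'` over the same time and
spatial domains, every sample time `t ∈ 𝕋` and every location `l ∈ L`, if
`(ω,t,l) ⊨ φ` and `‖ω − ω'‖_∞ < ρ(φ,ω,t,l)`, then `(ω',t,l) ⊨ φ`. -/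
theorem sastl_quantitative_correctness
    [Fintype Var] [Nonempty Var] [Fintype Loc] [Nonempty Loc]
    (F : Frame Dom Loc) (ω ω' : Var → ℝ → Loc → ℝ)
    (φ : SaSTL Var Dom) (hφ : WellFormed F φ)
    (t : ℝ) (ht : t ∈ F.T) (l : Loc)
    (hsat : sat F ω φ t l)
    (hdist : supDist F ω ω' < rho F ω φ t l) :
    sat F ω' φ t l := by
  exact (sastl_key F ω ω' φ hφ t ht l).1 hdist

end
end

section
/- Until-case soundness (dense time): Let t ∈ ℝ, let A ⊆ ℝ be a nonempty set, and let f, g : ℝ → ℝ. Assume that for every t' ∈ A the set {f(t'') : t'' ∈ (t,t')} is bounded below, and that the set {min(g(t'), inf_{t''∈(t,t')} f(t'')) : t' ∈ A} is bounded above, where the infimum over the empty set is interpreted as any value ≥ 0 (e.g. Mathlib's convention sInf ∅ = 0 may be used, together with the convention that min(g(t'), inf ∅) is replaced by g(t') when (t,t') is empty). If sup_{t'∈A} min(g(t'), inf_{t''∈(t,t')} f(t'')) > 0, then there exists t' ∈ A such that g(t') > 0 and f(t'') > 0 for every t'' ∈ (t,t'). -/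
open scoped Classical

/-- **Until-case soundness (dense time)**: let `t ∈ ℝ`, let `A ⊆ ℝ` be
nonempty, and let `f, g : ℝ → ℝ`.  Assume that for every `t' ∈ A` the set
`{f t'' : t'' ∈ (t, t')}` is bounded below, and that the set of values
`min (g t') (inf_{t'' ∈ (t,t')} f t'')` for `t' ∈ A` is bounded above, where
`min (g t') (inf ∅)` is replaced by `g t'` when the interval `(t, t')` is
empty.  If the supremum over `t' ∈ A` of these values is strictly positive,
then there exists `t' ∈ A` with `g t' > 0` and `f t'' > 0` for every
`t'' ∈ (t, t')`. -/
theorem until_case_soundness (t : ℝ) (A : Set ℝ) (hA : A.Nonempty) (f g : ℝ → ℝ)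
    (hbb : ∀ t' ∈ A, BddBelow (f '' Set.Ioo t t'))
    (hba : BddAbove ((fun t' =>
      if (Set.Ioo t t').Nonempty then min (g t') (sInf (f '' Set.Ioo t t'))
      else g t') '' A))
    (hpos : 0 < sSup ((fun t' =>
      if (Set.Ioo t t').Nonempty then min (g t') (sInf (f '' Set.Ioo t t'))
      else g t') '' A)) :
    ∃ t' ∈ A, 0 < g t' ∧ ∀ t'' ∈ Set.Ioo t t', 0 < f t'' := by
  obtain ⟨x, hx, hx0⟩ := exists_lt_of_lt_csSup (hA.image _) hpos
  obtain ⟨t', ht', hxeq⟩ := hx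
  refine ⟨t', ht', ?_⟩
  by_cases hne : (Set.Ioo t t').Nonempty
  · simp only [hne, if_true] at hxeq
    subst hxeq
    refine ⟨lt_of_lt_of_le hx0 (min_le_left _ _), fun t'' ht'' => ?_⟩
    calc (0:ℝ) < min (g t') (sInf (f '' Set.Ioo t t')) := hx0
      _ ≤ sInf (f '' Set.Ioo t t') := min_le_right _ _
      _ ≤ f t'' := csInf_le (hbb t' ht') ⟨t'', ht'', rfl⟩
  · simp only [hne, if_false] at hxeq
    subst hxeq
    exact ⟨hx0, fun t'' ht'' => absurd ⟨t'', ht''⟩ hne⟩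
end
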